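/- (i) For every T-invariant Borel probability measure μ on X, h_ν(μ) ≤ 0. (ii) If moreover μ satisfies the duality ∫ 𝓛_0(φ) dμ = ∫ φ dμ for every continuous φ : X → [−∞, ∞) for which both sides are defined, then h_ν(μ) = 0, i.e. μ is a measure of maximal entropy. -/

import Mathlib

open MeasureTheory Real Filter

/-- The Ruelle operator `(𝓛_A φ)(x) = ∫_{Ker T} e^{A(z + v_x)} φ(z + v_x) dν(z)`,
where `ν` is the a priori probability measure (supported on `Ker T`) and `v x` is the
unique element of `E` with `T (v x) = x`. -/
noncomputable def ruelle {X : Type*} [NormedAddCommGroup X] [NormedSpace ℝ X]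
    [MeasurableSpace X] (ν : Measure X) (v : X → X) (A φ : X → ℝ) (x : X) : ℝ :=
  ∫ z, Real.exp (A (z + v x)) * φ (z + v x) ∂ν

/-- The entropy `h_ν(μ) = inf { ∫ log (𝓛_0 u / u) dμ : u bounded continuous, u > 0 }`. -/
noncomputable def entropy {X : Type*} [NormedAddCommGroup X] [NormedSpace ℝ X]
    [MeasurableSpace X] (ν : Measure X) (v : X → X) (μ : Measure X) : ℝ :=
  sInf { r : ℝ | ∃ u : X → ℝ, Continuous u ∧ (∃ C : ℝ, ∀ x, |u x| ≤ C) ∧ (∀ x, 0 < u x) ∧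
    r = ∫ x, Real.log (ruelle ν v (fun _ => (0 : ℝ)) u x / u x) ∂μ }

set_option maxHeartbeats 1000000

/-- (i) every `T`-invariant Borel probability measure `μ` has
`h_ν(μ) ≤ 0`; (ii) if moreover `μ` satisfies the duality `∫ 𝓛_0 φ dμ = ∫ φ dμ` for all
continuous `φ` for which both sides are defined, then `h_ν(μ) = 0`, i.e. `μ` has maximal
entropy. -/
theorem stmt5 {X : Type*} [NormedAddCommGroup X] [NormedSpace ℝ X] [CompleteSpace X]
    [MeasurableSpace X] [BorelSpace X]
    (T : X →L[ℝ] X) (hTsurj : Function.Surjective T) (hTinj : ¬ Function.Injective T)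
    (hfd : FiniteDimensional ℝ (LinearMap.ker (T : X →ₗ[ℝ] X))) (hpos : 0 < Module.finrank ℝ (LinearMap.ker (T : X →ₗ[ℝ] X)))
    (E : ℕ → Submodule ℝ X)
    (hEclosed : ∀ n, 1 ≤ n → IsClosed ((E n : Set X)))
    (hEcompl : ∀ n, 1 ≤ n → IsCompl (LinearMap.ker (((T ^ n : X →L[ℝ] X) : X →ₗ[ℝ] X))) (E n))
    (hEmap : ∀ n, 1 ≤ n → ∀ u ∈ E (n + 1), T u ∈ E n)
    (ν : Measure X) [IsProbabilityMeasure ν] (hνsupp : ν ((LinearMap.ker (T : X →ₗ[ℝ] X) : Set X)ᶜ) = 0)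
    (v : X → X) (hv : ∀ x, v x ∈ E 1 ∧ T (v x) = x)
    (μ : Measure X) [IsProbabilityMeasure μ] (hinv : Measure.map T μ = μ) :
    entropy ν v μ ≤ 0 ∧
      ((∀ φ : X → ℝ, Continuous φ → Integrable φ μ →
          Integrable (fun x => ruelle ν v (fun _ => (0 : ℝ)) φ x) μ →
          ∫ x, ruelle ν v (fun _ => (0 : ℝ)) φ x ∂μ = ∫ x, φ x ∂μ) →
        entropy ν v μ = 0) := by
  have hmT : Measurable T := T.continuous.measurable
  set S : Set ℝ := { r : ℝ | ∃ u : X → ℝ, Continuous u ∧ (∃ C : ℝ, ∀ x, |u x| ≤ C) ∧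
    (∀ x, 0 < u x) ∧
    r = ∫ x, Real.log (ruelle ν v (fun _ => (0 : ℝ)) u x / u x) ∂μ } with hS
  have hES : entropy ν v μ = sInf S := rfl
  have h0S : (0 : ℝ) ∈ S := by
    refine ⟨fun _ => 1, continuous_const, ⟨1, fun x => by norm_num⟩, fun x => one_pos, ?_⟩
    have h1 : ∀ x, ruelle ν v (fun _ => (0 : ℝ)) (fun _ => (1 : ℝ)) x = 1 := by
      intro x; simp [ruelle]
    simp [h1]
  have hle : entropy ν v μ ≤ 0 := by
    rw [hES]
    by_cases hb : BddBelow S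
    · exact csInf_le hb h0S
    · rw [Real.sInf_of_not_bddBelow hb]
  refine ⟨hle, ?_⟩
  intro hdual
  rw [hES]
  refine le_antisymm (by rw [← hES]; exact hle) (le_csInf ⟨0, h0S⟩ ?_)
  rintro r ⟨u, hu_cont, ⟨C, hC⟩, hu_pos, hr⟩
  -- v is continuous
  have hc1 : IsCompl (LinearMap.ker (T : X →ₗ[ℝ] X)) (E 1) := by
    have h := hEcompl 1 le_rfl
    rwa [pow_one] at h
  haveI : CompleteSpace (E 1) := (hEclosed 1 le_rfl).completeSpace_coe
  set Sv : (E 1) →L[ℝ] X := T.comp (Submodule.subtypeL (E 1)) with hSvdef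
  have hSvapp : ∀ e : E 1, Sv e = T (e : X) := fun e => rfl
  have hker : LinearMap.ker (Sv : (E 1) →ₗ[ℝ] X) = ⊥ := by
    rw [LinearMap.ker_eq_bot']
    intro e he
    have h1 : (e : X) ∈ LinearMap.ker (T : X →ₗ[ℝ] X) := he
    exact Subtype.ext (Submodule.disjoint_def.mp hc1.disjoint _ h1 e.2)
  have hrange : LinearMap.range (Sv : (E 1) →ₗ[ℝ] X) = ⊤ := by
    rw [LinearMap.range_eq_top]
    intro x
    obtain ⟨y, hy⟩ := hTsurj x
    have hy' : y ∈ (⊤ : Submodule ℝ X) := trivial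
    rw [← hc1.sup_eq_top] at hy'
    obtain ⟨k, hk, e, he, hke⟩ := Submodule.mem_sup.mp hy'
    refine ⟨⟨e, he⟩, ?_⟩
    have hTk : T k = 0 := hk
    have hTe : T e = x := by
      have h2 := congrArg T hke
      rw [map_add, hTk, zero_add] at h2
      rw [h2, hy]
    simpa [hSvapp] using hTe
  set eqv := ContinuousLinearEquiv.ofBijective Sv hker hrange with heqv
  have hv_cont : Continuous v := by
    have hveq : v = fun x => ((eqv.symm x : E 1) : X) := by
      funext x
      have h1 : T ((eqv.symm x : E 1) : X) = x := by
        have h2 := ContinuousLinearEquiv.ofBijective_apply_symm_apply Sv hker hrange x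
        simpa [heqv, hSvapp] using h2
      have hd : v x - ((eqv.symm x : E 1) : X) ∈ LinearMap.ker (T : X →ₗ[ℝ] X) := by
        simp [LinearMap.mem_ker, map_sub, (hv x).2, h1]
      have hdE : v x - ((eqv.symm x : E 1) : X) ∈ E 1 :=
        Submodule.sub_mem _ (hv x).1 (eqv.symm x).2
      exact sub_eq_zero.mp (Submodule.disjoint_def.mp hc1.disjoint _ hd hdE)
    rw [hveq]
    exact continuous_subtype_val.comp eqv.symm.continuous
  -- basic facts about L
  have hmean : ∀ x : X, Integrable (fun z => u (z + v x)) ν := by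
    intro x
    refine Integrable.mono' (integrable_const C)
      ((hu_cont.comp (continuous_id.add continuous_const)).aestronglyMeasurable) ?_
    exact Eventually.of_forall fun z => by simpa using hC (z + v x)
  set L : X → ℝ := fun x => ∫ z, u (z + v x) ∂ν with hLdef
  have hL_ruelle : ∀ x, ruelle ν v (fun _ => (0 : ℝ)) u x = L x := by
    intro x; simp [ruelle, hLdef]
  have hL_pos : ∀ x, 0 < L x := by
    intro x
    rw [hLdef]
    rw [integral_pos_iff_support_of_nonneg (fun z => (hu_pos _).le) (hmean x)]
    have hsupp : Function.support (fun z => u (z + v x)) = Set.univ :=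
      Set.eq_univ_of_forall fun z => (hu_pos _).ne'
    simp [hsupp]
  have hL_le : ∀ x, L x ≤ C := by
    intro x
    calc L x ≤ ∫ _, C ∂ν :=
      integral_mono (hmean x) (integrable_const C) fun z => (le_abs_self _).trans (hC _)
    _ = C := by simp
  have hC0 : 0 < C := lt_of_lt_of_le (hu_pos 0) ((le_abs_self _).trans (hC 0))
  have hL_cont : Continuous L := by
    rw [hLdef]
    refine continuous_of_dominated
      (fun x => (hu_cont.comp (continuous_id.add continuous_const)).aestronglyMeasurable)
      (fun x => Eventually.of_forall fun z => by simpa using hC _)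
      (integrable_const C) ?_
    exact Eventually.of_forall fun z => hu_cont.comp (continuous_const.add hv_cont)
  have hker_ae : ∀ᵐ z ∂ν, z ∈ LinearMap.ker (T : X →ₗ[ℝ] X) := by
    rw [ae_iff]
    exact hνsupp
  -- the key inequality for regularized potentials
  have key : ∀ ε : ℝ, 0 < ε → 0 ≤ ∫ x, Real.log ((L x + ε) / (u x + ε)) ∂μ := by
    intro ε hε
    have hw_pos : ∀ y : X, 0 < u y + ε := fun y => add_pos (hu_pos y) hε
    have hw_le : ∀ y : X, u y + ε ≤ C + ε :=
      fun y => add_le_add_left ((le_abs_self _).trans (hC y)) ε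
    have hLw_pos : ∀ x, 0 < L x + ε := fun x => add_pos (hL_pos x) hε
    have hLw_ge : ∀ x, ε ≤ L x + ε := fun x => le_add_of_nonneg_left (hL_pos x).le
    have hLw_le : ∀ x, L x + ε ≤ C + ε := fun x => add_le_add_left (hL_le x) ε
    have hLw_cont : Continuous fun x => L x + ε := hL_cont.add continuous_const
    set ψ : X → ℝ := fun y => (u y + ε) / (L (T y) + ε) with hψdef
    have hψ_pos : ∀ y, 0 < ψ y := fun y => div_pos (hw_pos y) (hLw_pos _)
    have hψ_le : ∀ y, ψ y ≤ (C + ε) / ε :=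
      fun y => div_le_div₀ (by positivity) (hw_le y) hε (hLw_ge _)
    have hψ_cont : Continuous ψ :=
      (hu_cont.add continuous_const).div (hLw_cont.comp T.continuous)
        fun y => (hLw_pos _).ne'
    have hψ_int : Integrable ψ μ := by
      refine Integrable.mono' (integrable_const ((C + ε) / ε)) hψ_cont.aestronglyMeasurable
        (Eventually.of_forall fun y => ?_)
      rw [Real.norm_eq_abs, abs_of_pos (hψ_pos y)]
      exact hψ_le y
    have hmean_w : ∀ x, Integrable (fun z => u (z + v x) + ε) ν :=
      fun x => (hmean x).add (integrable_const ε)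
    have hLww : ∀ x, ∫ z, (u (z + v x) + ε) ∂ν = L x + ε := by
      intro x
      rw [integral_add (hmean x) (integrable_const ε)]
      simp [hLdef]
    have hruelleψ : ∀ x, ruelle ν v (fun _ => (0 : ℝ)) ψ x = 1 := by
      intro x
      have hae : (fun z => Real.exp ((fun _ : X => (0 : ℝ)) (z + v x)) * ψ (z + v x))
          =ᵐ[ν] fun z => (u (z + v x) + ε) / (L x + ε) := by
        filter_upwards [hker_ae] with z hz
        have hTz : T z = 0 := hz
        have hTx : T (z + v x) = x := by rw [map_add, hTz, zero_add, (hv x).2]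
        simp [hψdef, hTx, Real.exp_zero]
      rw [ruelle, integral_congr_ae hae, integral_div, hLww x,
        div_self (hLw_pos x).ne']
    have hruelleψ_int : Integrable (fun x => ruelle ν v (fun _ => (0 : ℝ)) ψ x) μ := by
      have h1 : (fun x => ruelle ν v (fun _ => (0 : ℝ)) ψ x) = fun _ => (1 : ℝ) :=
        funext hruelleψ
      rw [h1]; exact integrable_const 1
    have hψint1 : ∫ y, ψ y ∂μ = 1 := by
      rw [← hdual ψ hψ_cont hψ_int hruelleψ_int]
      simp [hruelleψ]
    -- integrability of the log terms
    have hBnd : ∀ t : ℝ, ε ≤ t → t ≤ C + ε →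
        |Real.log t| ≤ |Real.log ε| + |Real.log (C + ε)| := by
      intro t h1 h2
      rw [abs_le]
      constructor
      · have h3 : Real.log ε ≤ Real.log t := Real.log_le_log hε h1
        have h4 : -|Real.log ε| ≤ Real.log ε := neg_abs_le _
        have h5 : (0 : ℝ) ≤ |Real.log (C + ε)| := abs_nonneg _
        linarith
      · have h3 : Real.log t ≤ Real.log (C + ε) :=
          Real.log_le_log (lt_of_lt_of_le hε h1) h2
        have h4 : Real.log (C + ε) ≤ |Real.log (C + ε)| := le_abs_self _
        have h5 : (0 : ℝ) ≤ |Real.log ε| := abs_nonneg _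
        linarith
    have hlogLw_cont : Continuous fun x => Real.log (L x + ε) :=
      hLw_cont.log fun x => (hLw_pos x).ne'
    have hIlogLwT : Integrable (fun x => Real.log (L (T x) + ε)) μ := by
      refine Integrable.mono' (integrable_const (|Real.log ε| + |Real.log (C + ε)|))
        ((hlogLw_cont.comp T.continuous).aestronglyMeasurable)
        (Eventually.of_forall fun x => ?_)
      rw [Real.norm_eq_abs]
      exact hBnd _ (hLw_ge _) (hLw_le _)
    have hIlogLw : Integrable (fun x => Real.log (L x + ε)) μ := by
      refine Integrable.mono' (integrable_const (|Real.log ε| + |Real.log (C + ε)|))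
        hlogLw_cont.aestronglyMeasurable (Eventually.of_forall fun x => ?_)
      rw [Real.norm_eq_abs]
      exact hBnd _ (hLw_ge _) (hLw_le _)
    have hIlogw : Integrable (fun x => Real.log (u x + ε)) μ := by
      refine Integrable.mono' (integrable_const (|Real.log ε| + |Real.log (C + ε)|))
        (((hu_cont.add continuous_const).log fun x => (hw_pos x).ne').aestronglyMeasurable)
        (Eventually.of_forall fun x => ?_)
      rw [Real.norm_eq_abs]
      exact hBnd _ (le_add_of_nonneg_left (hu_pos x).le) (hw_le _)
    -- invariance
    have hinv_log : ∫ x, Real.log (L (T x) + ε) ∂μ = ∫ x, Real.log (L x + ε) ∂μ := by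
      conv_rhs => rw [← hinv]
      rw [integral_map hmT.aemeasurable hlogLw_cont.aestronglyMeasurable]
    -- the chain of (in)equalities
    have hineq : ∫ x, (1 - ψ x) ∂μ ≤ ∫ x, (Real.log (L (T x) + ε) - Real.log (u x + ε)) ∂μ := by
      refine integral_mono ((integrable_const 1).sub hψ_int) (hIlogLwT.sub hIlogw) fun x => ?_
      have h1 : Real.log (ψ x) ≤ ψ x - 1 := Real.log_le_sub_one_of_pos (hψ_pos x)
      have h2 : Real.log (ψ x) = Real.log (u x + ε) - Real.log (L (T x) + ε) :=
        Real.log_div (hw_pos x).ne' (hLw_pos _).ne'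
      simp only at h1 h2 ⊢
      linarith
    have h3 : ∫ x, (1 - ψ x) ∂μ = 0 := by
      rw [integral_sub (integrable_const 1) hψ_int, hψint1]
      simp
    have h4 : ∫ x, (Real.log (L (T x) + ε) - Real.log (u x + ε)) ∂μ
        = (∫ x, Real.log (L x + ε) ∂μ) - ∫ x, Real.log (u x + ε) ∂μ := by
      rw [integral_sub hIlogLwT hIlogw, hinv_log]
    have h5 : ∫ x, Real.log ((L x + ε) / (u x + ε)) ∂μ
        = (∫ x, Real.log (L x + ε) ∂μ) - ∫ x, Real.log (u x + ε) ∂μ := by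
      rw [← integral_sub hIlogLw hIlogw]
      refine integral_congr_ae (Eventually.of_forall fun x => ?_)
      exact Real.log_div (hLw_pos x).ne' (hw_pos x).ne'
    rw [h5, ← h4]
    rw [h3] at hineq
    exact hineq
  -- conclude: 0 ≤ r
  rw [hr]
  simp only [hL_ruelle]
  by_cases hInt : Integrable (fun x => Real.log (L x / u x)) μ
  · -- dominated convergence of the regularized integrals
    have hdom : ∀ ε : ℝ, 0 < ε → ∀ x,
        |Real.log ((L x + ε) / (u x + ε))| ≤ |Real.log (L x / u x)| := by
      intro ε hε x
      have hu' : (0:ℝ) < u x + ε := add_pos (hu_pos x) hε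
      have hL' : (0:ℝ) < L x + ε := add_pos (hL_pos x) hε
      rcases le_total (L x) (u x) with h | h
      · have h1 : L x / u x ≤ (L x + ε) / (u x + ε) := by
          rw [div_le_div_iff₀ (hu_pos x) hu']
          nlinarith [hε, h, (hL_pos x), (hu_pos x)]
        have h2 : (L x + ε) / (u x + ε) ≤ 1 := by
          rw [div_le_one hu']; linarith
        have h3 : Real.log ((L x + ε) / (u x + ε)) ≤ 0 :=
          Real.log_nonpos (le_of_lt (div_pos hL' hu')) h2
        have h4 : Real.log (L x / u x) ≤ Real.log ((L x + ε) / (u x + ε)) :=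
          Real.log_le_log (div_pos (hL_pos x) (hu_pos x)) h1
        rw [abs_of_nonpos h3, abs_of_nonpos (h4.trans h3)]
        linarith
      · have h1 : (L x + ε) / (u x + ε) ≤ L x / u x := by
          rw [div_le_div_iff₀ hu' (hu_pos x)]
          nlinarith [hε, h, (hL_pos x), (hu_pos x)]
        have h2 : (1 : ℝ) ≤ (L x + ε) / (u x + ε) := by
          rw [le_div_iff₀ hu']; linarith
        have h3 : 0 ≤ Real.log ((L x + ε) / (u x + ε)) := Real.log_nonneg h2
        have h4 : Real.log ((L x + ε) / (u x + ε)) ≤ Real.log (L x / u x) :=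
          Real.log_le_log (div_pos hL' hu') h1
        rw [abs_of_nonneg h3, abs_of_nonneg (h3.trans h4)]
        linarith
    have hεn : ∀ n : ℕ, (0 : ℝ) < 1 / ((n : ℝ) + 1) := fun n => by positivity
    have htend : Tendsto
        (fun n : ℕ => ∫ x, Real.log ((L x + 1 / ((n : ℝ) + 1)) / (u x + 1 / ((n : ℝ) + 1))) ∂μ)
        atTop (nhds (∫ x, Real.log (L x / u x) ∂μ)) := by
      refine tendsto_integral_of_dominated_convergence (fun x => |Real.log (L x / u x)|)
        ?_ hInt.abs ?_ ?_
      · intro n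
        exact (((hL_cont.add continuous_const).div (hu_cont.add continuous_const)
          fun x => (add_pos (hu_pos x) (hεn n)).ne').log
          fun x => (div_pos (add_pos (hL_pos x) (hεn n)) (add_pos (hu_pos x) (hεn n))).ne').aestronglyMeasurable
      · intro n
        exact Eventually.of_forall fun x => by
          rw [Real.norm_eq_abs]; exact hdom _ (hεn n) x
      · refine Eventually.of_forall fun x => ?_
        have hx : Tendsto (fun n : ℕ => (1 : ℝ) / ((n : ℝ) + 1)) atTop (nhds 0) :=
          tendsto_one_div_add_atTop_nhds_zero_nat
        have hdivt : Tendsto (fun n : ℕ => (L x + 1 / ((n : ℝ) + 1)) / (u x + 1 / ((n : ℝ) + 1)))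
            atTop (nhds (L x / u x)) := by
          have hnum : Tendsto (fun n : ℕ => L x + 1 / ((n : ℝ) + 1)) atTop (nhds (L x + 0)) :=
            tendsto_const_nhds.add hx
          have hden : Tendsto (fun n : ℕ => u x + 1 / ((n : ℝ) + 1)) atTop (nhds (u x + 0)) :=
            tendsto_const_nhds.add hx
          rw [add_zero] at hnum hden
          exact hnum.div hden (hu_pos x).ne'
        have hlogc : ContinuousAt Real.log (L x / u x) :=
          Real.continuousAt_log (div_pos (hL_pos x) (hu_pos x)).ne'
        exact (hlogc.tendsto).comp hdivt
    have hnn : ∀ n : ℕ,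
        0 ≤ ∫ x, Real.log ((L x + 1 / ((n : ℝ) + 1)) / (u x + 1 / ((n : ℝ) + 1))) ∂μ :=
      fun n => key _ (hεn n)
    exact ge_of_tendsto htend (Eventually.of_forall hnn)
  · rw [integral_undef hInt]
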